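/- In ℝ^5, the diagonal conv{0,(1,1,1,1,1)} of the hypercube [0,1]^5 and the tetrahedron with vertices (0,0,0,1,1), (0,0,1,0,1), (0,1,1,1,0), (1,1,0,0,0) are disjoint and their Euclidean distance equals 1/√58. -/

import Mathlib

/-- Points of ℝ^5 as elements of Euclidean space. -/
noncomputable def pt5 (x y z w u : ℝ) : EuclideanSpace ℝ (Fin 5) := WithLp.toLp 2 ![x, y, z, w, u]

noncomputable def aa : EuclideanSpace ℝ (Fin 5) := pt5 (-4) 5 (-2) (-2) 3
lemma inner_aa (x : EuclideanSpace ℝ (Fin 5)) :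
    inner ℝ aa x = (-4)*x 0 + 5*x 1 + (-2)*x 2 + (-2)*x 3 + (3:ℝ)*x 4 := by
  simp [aa, pt5, PiLp.inner_apply, Fin.sum_univ_five]; ring
lemma inner_pt5 (a b c d e : ℝ) :
    inner ℝ aa (pt5 a b c d e) = (-4)*a + 5*b + (-2)*c + (-2)*d + (3:ℝ)*e := by
  rw [inner_aa]; simp [pt5]
lemma norm_aa : ‖aa‖ = Real.sqrt 58 := by
  rw [EuclideanSpace.norm_eq]
  simp [aa, pt5, Fin.sum_univ_five]
  norm_num

lemma convex_lvl : Convex ℝ {x : EuclideanSpace ℝ (Fin 5) | inner ℝ aa x = (1:ℝ)} := by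
  intro x hx y hy a b ha hb hab
  simp only [Set.mem_setOf_eq] at *
  rw [inner_add_right, real_inner_smul_right, real_inner_smul_right, hx, hy]
  linarith

/-- In ℝ^5, the diagonal conv{0,(1,1,1,1,1)} of the hypercube [0,1]^5
and the tetrahedron with vertices (0,0,0,1,1), (0,0,1,0,1), (0,1,1,1,0), (1,1,0,0,0)
are disjoint and their Euclidean distance equals 1/√58. -/
theorem stmt_17 :
    let P := segment ℝ (pt5 0 0 0 0 0) (pt5 1 1 1 1 1)
    let Q := convexHull ℝ {pt5 0 0 0 1 1, pt5 0 0 1 0 1, pt5 0 1 1 1 0, pt5 1 1 0 0 0}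
    P ∩ Q = ∅ ∧ sInf (Set.image2 dist P Q) = 1 / Real.sqrt 58 := by
  intro P Q
  have hP : ∀ p ∈ P, inner ℝ aa p = (0:ℝ) := by
    rintro p ⟨a, b, ha, hb, hab, rfl⟩
    rw [inner_add_right, real_inner_smul_right, real_inner_smul_right, inner_pt5, inner_pt5]
    ring
  have hQ : ∀ q ∈ Q, inner ℝ aa q = (1:ℝ) := by
    intro q hq
    refine convexHull_min ?_ convex_lvl hq
    rintro x (rfl | rfl | rfl | rfl) <;> · show inner ℝ aa _ = (1:ℝ); rw [inner_pt5]; norm_num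
  have h58 : (0:ℝ) < Real.sqrt 58 := Real.sqrt_pos.2 (by norm_num)
  have hlow : ∀ p ∈ P, ∀ q ∈ Q, 1 / Real.sqrt 58 ≤ dist p q := by
    intro p hp q hq
    have h1 : inner ℝ aa (q - p) = (1:ℝ) := by
      rw [inner_sub_right, hP p hp, hQ q hq]; ring
    have h2 : (1:ℝ) ≤ Real.sqrt 58 * ‖q - p‖ := by
      calc (1:ℝ) = inner ℝ aa (q - p) := h1.symm
        _ ≤ |inner ℝ aa (q - p)| := le_abs_self _
        _ ≤ ‖aa‖ * ‖q - p‖ := abs_real_inner_le_norm _ _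
        _ = Real.sqrt 58 * ‖q - p‖ := by rw [norm_aa]
    rw [dist_eq_norm, ← norm_sub_rev]
    rw [div_le_iff₀ h58]
    linarith
  -- witness points
  set p0 : EuclideanSpace ℝ (Fin 5) := pt5 (25/58) (25/58) (25/58) (25/58) (25/58) with hp0
  set q0 : EuclideanSpace ℝ (Fin 5) := pt5 (21/58) (30/58) (23/58) (23/58) (28/58) with hq0
  have hp0P : p0 ∈ P := by
    refine ⟨33/58, 25/58, by norm_num, by norm_num, by norm_num, ?_⟩
    simp only [hp0, pt5]
    ext i
    fin_cases i <;> simp [pt5] <;> norm_num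
  have hq0Q : q0 ∈ Q := by
    have hsub : ({pt5 0 0 0 1 1, pt5 0 0 1 0 1, pt5 0 1 1 1 0, pt5 1 1 0 0 0} : Set (EuclideanSpace ℝ (Fin 5))) ⊆ Q := subset_convexHull ℝ _
    have hv1 : pt5 0 0 0 1 1 ∈ Q := hsub (by left; rfl)
    have hv2 : pt5 0 0 1 0 1 ∈ Q := hsub (by right; left; rfl)
    have hv3 : pt5 0 1 1 1 0 ∈ Q := hsub (by right; right; left; rfl)
    have hv4 : pt5 1 1 0 0 0 ∈ Q := hsub (by right; right; right; rfl)
    have hconv : Convex ℝ Q := convex_convexHull ℝ _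
    have m12 := hconv hv1 hv2 (by norm_num : (0:ℝ) ≤ 1/2) (by norm_num : (0:ℝ) ≤ 1/2) (by norm_num)
    have m123 := hconv m12 hv3 (by norm_num : (0:ℝ) ≤ 28/37) (by norm_num : (0:ℝ) ≤ 9/37) (by norm_num)
    have m := hconv m123 hv4 (by norm_num : (0:ℝ) ≤ 37/58) (by norm_num : (0:ℝ) ≤ 21/58) (by norm_num)
    convert m using 1
    simp only [hq0, pt5]
    ext i
    fin_cases i <;> simp [pt5] <;> norm_num
  have hdist : dist p0 q0 = 1 / Real.sqrt 58 := by
    rw [EuclideanSpace.dist_eq]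
    have : ∑ i, dist (p0 i) (q0 i) ^ 2 = 1/58 := by
      simp [hp0, hq0, pt5, Fin.sum_univ_five, Real.dist_eq]
      norm_num
    rw [this, one_div, one_div, ← Real.sqrt_inv]
  constructor
  · ext x
    simp only [Set.mem_inter_iff, Set.mem_empty_iff_false, iff_false]
    rintro ⟨hxP, hxQ⟩
    have := hP x hxP
    have := hQ x hxQ
    simp_all
  · apply le_antisymm
    · have : (1 / Real.sqrt 58) ∈ Set.image2 dist P Q := by
        rw [← hdist]; exact Set.mem_image2_of_mem hp0P hq0Q
      exact csInf_le ⟨1 / Real.sqrt 58, by rintro y ⟨p, hp, q, hq, rfl⟩; exact hlow p hp q hq⟩ this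
    · apply le_csInf ⟨dist p0 q0, Set.mem_image2_of_mem hp0P hq0Q⟩
      rintro y ⟨p, hp, q, hq, rfl⟩
      exact hlow p hp q hq
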